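/- Let r be an odd prime with r ≠ 5 and let V be the deleted permutation module over ZMod r. Define the ZMod r-bilinear map γ : V × V → V by γ(f, g)(m) = 5 * f m * g m − ∑ j, f j * g j. Then: (1) γ takes values in V and is Equiv.Perm (Fin 5)-equivariant, i.e. γ(σ • f, σ • g) = σ • γ(f, g) for all σ ∈ Equiv.Perm (Fin 5); and (2) every alternatingGroup (Fin 5)-equivariant ZMod r-bilinear map μ : V × V → V is a ZMod r-scalar multiple of γ. In particular, the space of alternatingGroup (Fin 5)-equivariant bilinear maps V × V → V is one-dimensional over ZMod r. -/

import Mathlib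

/-- The deleted permutation module: functions `Fin 5 → ZMod r` summing to zero. -/
def V (r : ℕ) : Submodule (ZMod r) (Fin 5 → ZMod r) where
  carrier := {f | ∑ i, f i = 0}
  add_mem' := by
    intro a b ha hb
    simp only [Set.mem_setOf_eq, Pi.add_apply, Finset.sum_add_distrib] at *
    rw [ha, hb, add_zero]
  zero_mem' := by simp
  smul_mem' := by
    intro c f hf
    simp only [Set.mem_setOf_eq, Pi.smul_apply, smul_eq_mul, ← Finset.mul_sum] at *
    rw [hf, mul_zero]

/-- The permutation action of `Equiv.Perm (Fin 5)` on `V r`, given by `σ • f = f ∘ σ⁻¹`. -/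
def rho (r : ℕ) : Representation (ZMod r) (Equiv.Perm (Fin 5)) (V r) where
  toFun σ :=
    { toFun := fun f => ⟨fun i => (f : Fin 5 → ZMod r) (σ⁻¹ i),
        (Equiv.sum_comp σ⁻¹ (f : Fin 5 → ZMod r)).trans f.2⟩
      map_add' := fun _ _ => rfl
      map_smul' := fun _ _ => rfl }
  map_one' := rfl
  map_mul' := fun _ _ => rfl

/-- The bilinear map `γ` of Table 1: `γ(f, g)(m) = 5 * f m * g m - ∑ j, f j * g j`. -/
def gammaFun (r : ℕ) (f g : Fin 5 → ZMod r) : Fin 5 → ZMod r :=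
  fun m => 5 * f m * g m - ∑ j, f j * g j

/-! ### auxiliary material -/

def wf (r : ℕ) (i : Fin 5) : Fin 5 → ZMod r := fun m => if i = m then 4 else -1

lemma wf_sum (r : ℕ) (i : Fin 5) : ∑ m, wf r i m = 0 := by
  fin_cases i <;> simp [wf, Fin.sum_univ_five] <;> ring

def wV (r : ℕ) (i : Fin 5) : V r := ⟨wf r i, wf_sum r i⟩

lemma trans3 : ∀ x y z : Fin 5, x ≠ y → x ≠ z → y ≠ z →
    ∃ σ : Equiv.Perm (Fin 5), Equiv.Perm.sign σ = 1 ∧ σ 0 = x ∧ σ 1 = y ∧ σ 2 = z := by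
  set_option maxRecDepth 10000 in decide

lemma transGen : ∀ x y z x' y' z' : Fin 5, x ≠ y → x ≠ z → y ≠ z →
    x' ≠ y' → x' ≠ z' → y' ≠ z' →
    ∃ σ : Equiv.Perm (Fin 5), Equiv.Perm.sign σ = 1 ∧ σ x = x' ∧ σ y = y' ∧ σ z = z' := by
  intro x y z x' y' z' h1 h2 h3 h4 h5 h6
  obtain ⟨σ1, hs1, e1, e2, e3⟩ := trans3 x y z h1 h2 h3
  obtain ⟨σ2, hs2, e1', e2', e3'⟩ := trans3 x' y' z' h4 h5 h6
  refine ⟨σ2 * σ1⁻¹, by simp [hs1, hs2], ?_, ?_, ?_⟩ <;>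
    simp [← e1, ← e2, ← e3, e1', e2', e3']

lemma compl2 : ∀ i : Fin 5, ∃ y z : Fin 5, i ≠ y ∧ i ≠ z ∧ y ≠ z := by decide

lemma compl1 : ∀ i j : Fin 5, i ≠ j → ∃ z : Fin 5, i ≠ z ∧ j ≠ z := by decide

lemma rho_wV (r : ℕ) (σ : Equiv.Perm (Fin 5)) (i : Fin 5) :
    rho r σ (wV r i) = wV r (σ i) := by
  apply Subtype.ext
  funext m
  show wf r i (σ⁻¹ m) = wf r (σ i) m
  simp only [wf]
  congr 1
  simp [Equiv.Perm.inv_def, Equiv.eq_symm_apply]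

lemma wf_sum' (r : ℕ) (m : Fin 5) : ∑ i, wf r i m = 0 := by
  fin_cases m <;> simp [wf, Fin.sum_univ_five] <;> ring

lemma sum_wV (r : ℕ) : ∑ i, wV r i = 0 := by
  apply Subtype.ext
  rw [Submodule.coe_sum]
  funext m
  simpa [Finset.sum_apply, wV] using wf_sum' r m

lemma sumww (r : ℕ) (i j : Fin 5) :
    ∑ k, wf r i k * wf r j k = if i = j then 20 else -5 := by
  by_cases hij : i = j
  · subst hij
    have step : ∀ k, wf r i k * wf r i k = (if i = k then (15 : ZMod r) else 0) + 1 := by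
      intro k
      simp only [wf]
      by_cases h1 : i = k <;> simp [h1] <;> ring
    rw [Finset.sum_congr rfl fun k _ => step k, Finset.sum_add_distrib,
      Finset.sum_ite_eq Finset.univ i (fun _ => (15 : ZMod r))]
    simp
    ring
  · have step : ∀ k, wf r i k * wf r j k =
        ((if i = k then (-5 : ZMod r) else 0) + (if j = k then (-5 : ZMod r) else 0)) + 1 := by
      intro k
      simp only [wf]
      by_cases h1 : i = k <;> by_cases h2 : j = k
      · exact absurd (h1.trans h2.symm) hij
      all_goals simp [h1, h2]; try ring
    rw [Finset.sum_congr rfl fun k _ => step k, Finset.sum_add_distrib, Finset.sum_add_distrib,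
      Finset.sum_ite_eq Finset.univ i (fun _ => (-5 : ZMod r)),
      Finset.sum_ite_eq Finset.univ j (fun _ => (-5 : ZMod r))]
    simp [hij]

lemma hsum (r : ℕ) (h : Fin 5 → ZMod r) (hh : ∑ i, h i = 0) (m : Fin 5) :
    ∑ i, h i * wf r i m = 5 * h m := by
  have step : ∀ i : Fin 5, h i * wf r i m = (if i = m then 5 * h i else 0) - h i := by
    intro i; simp only [wf]; split <;> ring
  rw [Finset.sum_congr rfl fun i _ => step i, Finset.sum_sub_distrib,
    Finset.sum_ite_eq' Finset.univ m (fun i => 5 * h i), hh]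
  simp

/-- gammaFun as a bilinear map. -/
def G (r : ℕ) : (Fin 5 → ZMod r) →ₗ[ZMod r] (Fin 5 → ZMod r) →ₗ[ZMod r] (Fin 5 → ZMod r) :=
  LinearMap.mk₂ (ZMod r) (gammaFun r)
    (fun f1 f2 g => by
      funext m
      show 5 * (f1 m + f2 m) * g m - ∑ x, (f1 x + f2 x) * g x = _
      have : ∑ x, (f1 x + f2 x) * g x = ∑ x, (f1 x * g x + f2 x * g x) :=
        Finset.sum_congr rfl fun x _ => add_mul _ _ _
      rw [this, Finset.sum_add_distrib]
      show _ = (5 * f1 m * g m - ∑ j, f1 j * g j) + (5 * f2 m * g m - ∑ j, f2 j * g j)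
      ring
    )
    (fun c f g => by
      funext m
      show 5 * (c * f m) * g m - ∑ x, (c * f x) * g x = c * (5 * f m * g m - ∑ j, f j * g j)
      have : ∑ x, (c * f x) * g x = c * ∑ x, f x * g x := by
        rw [Finset.mul_sum]
        exact Finset.sum_congr rfl fun x _ => by ring
      rw [this]
      ring
    )
    (fun f g1 g2 => by
      funext m
      show 5 * f m * (g1 m + g2 m) - ∑ x, f x * (g1 x + g2 x) = _
      have : ∑ x, f x * (g1 x + g2 x) = ∑ x, (f x * g1 x + f x * g2 x) :=
        Finset.sum_congr rfl fun x _ => mul_add _ _ _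
      rw [this, Finset.sum_add_distrib]
      show _ = (5 * f m * g1 m - ∑ j, f j * g1 j) + (5 * f m * g2 m - ∑ j, f j * g2 j)
      ring
    )
    (fun c f g => by
      funext m
      show 5 * f m * (c * g m) - ∑ x, f x * (c * g x) = c * (5 * f m * g m - ∑ j, f j * g j)
      have : ∑ x, f x * (c * g x) = c * ∑ x, f x * g x := by
        rw [Finset.mul_sum]
        exact Finset.sum_congr rfl fun x _ => by ring
      rw [this]
      ring
    )

lemma bilin_expand {r : ℕ} {M : Type*} [AddCommMonoid M] [Module (ZMod r) M]
    {N : Type*} [AddCommMonoid N] [Module (ZMod r) N]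
    (B : M →ₗ[ZMod r] M →ₗ[ZMod r] N) (x y : Fin 5 → ZMod r) (u v : Fin 5 → M) :
    B (∑ i, x i • u i) (∑ j, y j • v j) = ∑ i, ∑ j, (x i * y j) • B (u i) (v j) := by
  simp only [map_sum, LinearMap.sum_apply, map_smul, LinearMap.smul_apply, smul_smul,
    Finset.smul_sum]
  rw [Finset.sum_comm]
  exact Finset.sum_congr rfl fun i _ => Finset.sum_congr rfl fun j _ => by rw [mul_comm]

/-- Lemma 2.5 (Astill–Parker–Waldecker): for an odd prime `r ≠ 5`, the map `γ` takes
values in the deleted permutation module `V` and is `Sym(5)`-equivariant, and every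
`Alt(5)`-equivariant bilinear map `μ : V × V → V` is a `ZMod r`-scalar multiple of `γ`. -/
theorem gamma_unique_equivariant_bilinear
    (r : ℕ) (hr : r.Prime) (hodd : Odd r) (hr5 : r ≠ 5) :
    ((∀ f ∈ V r, ∀ g ∈ V r, gammaFun r f g ∈ V r) ∧
      (∀ σ : Equiv.Perm (Fin 5), ∀ f g : Fin 5 → ZMod r,
        gammaFun r (f ∘ ⇑σ⁻¹) (g ∘ ⇑σ⁻¹) = gammaFun r f g ∘ ⇑σ⁻¹)) ∧
    (∀ μ : V r →ₗ[ZMod r] V r →ₗ[ZMod r] V r,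
      (∀ σ ∈ alternatingGroup (Fin 5), ∀ f g : V r,
        μ (rho r σ f) (rho r σ g) = rho r σ (μ f g)) →
      ∃ c : ZMod r, ∀ f g : V r,
        (μ f g : Fin 5 → ZMod r) = c • gammaFun r (f : Fin 5 → ZMod r) (g : Fin 5 → ZMod r)) := by
  refine ⟨⟨?_, ?_⟩, ?_⟩
  · -- values in V
    intro f _ g _
    show ∑ m, (5 * f m * g m - ∑ j, f j * g j) = 0
    rw [Finset.sum_sub_distrib, Finset.sum_const, Finset.card_univ]
    have : ∑ m, 5 * f m * g m = 5 * ∑ m, f m * g m := by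
      rw [Finset.mul_sum]; exact Finset.sum_congr rfl fun m _ => by ring
    rw [this]
    simp [Fintype.card_fin, nsmul_eq_mul]
  · -- equivariance
    intro σ f g
    funext m
    show 5 * f (σ⁻¹ m) * g (σ⁻¹ m) - ∑ j, f (σ⁻¹ j) * g (σ⁻¹ j) = _
    rw [Equiv.sum_comp σ⁻¹ (fun j => f j * g j)]
    rfl
  · -- uniqueness
    intro μ hμ
    haveI : Fact r.Prime := ⟨hr⟩
    haveI : NeZero r := NeZero.of_pos hr.pos
    have hcast : ∀ n : ℕ, n.Prime → r ≠ n → ((n : ZMod r) ≠ 0) := by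
      intro n hn hrn h0
      rw [ZMod.natCast_eq_zero_iff] at h0
      exact hrn ((Nat.prime_dvd_prime_iff_eq hr hn).mp h0)
    have h2 : (2 : ZMod r) ≠ 0 := by
      have := hcast 2 Nat.prime_two (by rintro rfl; exact (Nat.not_odd_iff_even.mpr (by decide)) hodd)
      simpa using this
    have h5 : (5 : ZMod r) ≠ 0 := by
      have := hcast 5 (by norm_num) hr5
      simpa using this
    have h10 : (10 : ZMod r) ≠ 0 := by
      have : (10 : ZMod r) = 2 * 5 := by norm_num
      rw [this]
      exact mul_ne_zero h2 h5
    have h25 : (25 : ZMod r) ≠ 0 := by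
      have : (25 : ZMod r) = 5 * 5 := by norm_num
      rw [this]
      exact mul_ne_zero h5 h5
    set T : Fin 5 → Fin 5 → Fin 5 → ZMod r :=
      fun i j m => (μ (wV r i) (wV r j) : Fin 5 → ZMod r) m with hT
    -- equivariance of T
    have hEq : ∀ σ : Equiv.Perm (Fin 5), Equiv.Perm.sign σ = 1 →
        ∀ i j m, T (σ i) (σ j) (σ m) = T i j m := by
      intro σ hσ i j m
      have h := hμ σ (Equiv.Perm.mem_alternatingGroup.mpr hσ) (wV r i) (wV r j)
      rw [rho_wV, rho_wV] at h
      have h' := congrArg (fun v : V r => (v : Fin 5 → ZMod r) (σ m)) h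
      beta_reduce at h'
      rw [hT]
      simp only
      rw [h']
      show (μ (wV r i) (wV r j) : Fin 5 → ZMod r) (σ⁻¹ (σ m)) = _
      rw [← Equiv.Perm.mul_apply, inv_mul_cancel, Equiv.Perm.one_apply]
    -- orbit constancy
    have hP1 : ∀ i, T i i i = T 0 0 0 := by
      intro i
      obtain ⟨y, z, hy, hz, hyz⟩ := compl2 i
      obtain ⟨σ, hσ, e1, _, _⟩ := transGen 0 1 2 i y z (by decide) (by decide) (by decide) hy hz hyz
      have := hEq σ hσ 0 0 0
      rw [e1] at this
      exact this
    have hP2 : ∀ i m, i ≠ m → T i i m = T 0 0 1 := by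
      intro i m him
      obtain ⟨z, hz1, hz2⟩ := compl1 i m him
      obtain ⟨σ, hσ, e1, e2, _⟩ := transGen 0 1 2 i m z (by decide) (by decide) (by decide) him hz1 hz2
      have := hEq σ hσ 0 0 1
      rw [e1, e2] at this
      exact this
    have hP3 : ∀ i j, i ≠ j → T i j i = T 0 1 0 := by
      intro i j hij
      obtain ⟨z, hz1, hz2⟩ := compl1 i j hij
      obtain ⟨σ, hσ, e1, e2, _⟩ := transGen 0 1 2 i j z (by decide) (by decide) (by decide) hij hz1 hz2
      have := hEq σ hσ 0 1 0
      rw [e1, e2] at this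
      exact this
    have hP4 : ∀ i j, i ≠ j → T i j j = T 0 1 1 := by
      intro i j hij
      obtain ⟨z, hz1, hz2⟩ := compl1 i j hij
      obtain ⟨σ, hσ, e1, e2, _⟩ := transGen 0 1 2 i j z (by decide) (by decide) (by decide) hij hz1 hz2
      have := hEq σ hσ 0 1 1
      rw [e1, e2] at this
      exact this
    have hP5 : ∀ i j m, i ≠ j → i ≠ m → j ≠ m → T i j m = T 0 1 2 := by
      intro i j m h1' h2' h3'
      obtain ⟨σ, hσ, e1, e2, e3⟩ := transGen 0 1 2 i j m (by decide) (by decide) (by decide) h1' h2' h3'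
      have := hEq σ hσ 0 1 2
      rw [e1, e2, e3] at this
      exact this
    -- sum relations
    have hSm : ∀ i j, ∑ m, T i j m = 0 := fun i j => (μ (wV r i) (wV r j)).2
    have hSi : ∀ j m, ∑ i, T i j m = 0 := by
      intro j m
      have h0 : (∑ i, μ (wV r i) (wV r j)) = 0 := by
        rw [← LinearMap.sum_apply, ← map_sum, sum_wV, map_zero, LinearMap.zero_apply]
      have := congrArg (fun v : V r => (v : Fin 5 → ZMod r) m) h0
      simpa [Submodule.coe_sum, Finset.sum_apply] using this
    have hSj : ∀ i m, ∑ j, T i j m = 0 := by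
      intro i m
      have h0 : (∑ j, μ (wV r i) (wV r j)) = 0 := by
        rw [← map_sum, sum_wV, map_zero]
      have := congrArg (fun v : V r => (v : Fin 5 → ZMod r) m) h0
      simpa [Submodule.coe_sum, Finset.sum_apply] using this
    -- relations among parameters
    have R1 : T 0 0 0 + 4 * T 0 0 1 = 0 := by
      have := hSm 0 0
      rw [Fin.sum_univ_five] at this
      rw [hP2 0 2 (by decide), hP2 0 3 (by decide), hP2 0 4 (by decide)] at this
      linear_combination this
    have R2 : T 0 1 0 + T 0 1 1 + 3 * T 0 1 2 = 0 := by
      have := hSm 0 1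
      rw [Fin.sum_univ_five] at this
      rw [hP5 0 1 2 (by decide) (by decide) (by decide),
        hP5 0 1 3 (by decide) (by decide) (by decide),
        hP5 0 1 4 (by decide) (by decide) (by decide)] at this
      linear_combination this
    have R3 : T 0 0 1 + T 0 1 0 + 3 * T 0 1 2 = 0 := by
      have := hSi 0 1
      rw [Fin.sum_univ_five] at this
      rw [hP3 1 0 (by decide),
        hP5 2 0 1 (by decide) (by decide) (by decide),
        hP5 3 0 1 (by decide) (by decide) (by decide),
        hP5 4 0 1 (by decide) (by decide) (by decide)] at this
      linear_combination this
    have R4 : T 0 0 1 + T 0 1 1 + 3 * T 0 1 2 = 0 := by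
      have := hSj 0 1
      rw [Fin.sum_univ_five] at this
      rw [hP5 0 2 1 (by decide) (by decide) (by decide),
        hP5 0 3 1 (by decide) (by decide) (by decide),
        hP5 0 4 1 (by decide) (by decide) (by decide)] at this
      linear_combination this
    set c : ZMod r := T 0 1 2 / 10 with hc
    have he : T 0 1 2 = 10 * c := by
      rw [hc]
      field_simp
    have hd' : T 0 1 1 = T 0 0 1 := by linear_combination R2 - R3
    have hc' : T 0 1 0 = T 0 0 1 := by linear_combination R2 - R4
    have hb : T 0 0 1 = -15 * c := by
      have h2b : 2 * T 0 0 1 = 2 * (-15 * c) := by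
        linear_combination R3 + R4 - R2 - 3 * he
      exact mul_left_cancel₀ h2 h2b
    have ha : T 0 0 0 = 60 * c := by linear_combination R1 - 4 * hb
    -- pointwise description of μ on basis vectors
    have key : ∀ i j m, T i j m = c * gammaFun r (wf r i) (wf r j) m := by
      intro i j m
      have hγ : gammaFun r (wf r i) (wf r j) m
          = (if i = m then (4 : ZMod r) else -1) * (if j = m then (4 : ZMod r) else -1) * 5
            - (if i = j then (20 : ZMod r) else -5) := by
        show 5 * wf r i m * wf r j m - ∑ k, wf r i k * wf r j k = _
        rw [sumww]
        show 5 * (if i = m then (4:ZMod r) else -1) * (if j = m then (4:ZMod r) else -1) - _ = _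
        ring
      by_cases hij : i = j
      · subst hij
        by_cases him : i = m
        · subst him
          rw [hP1 i, hγ, ha]
          simp
          ring
        · rw [hP2 i m him, hγ, hb]
          simp [him]
          ring
      · by_cases him : i = m
        · subst him
          rw [hP3 i j (by exact hij), hγ, hc', hb]
          simp [hij, Ne.symm hij]
          ring
        · by_cases hjm : j = m
          · subst hjm
            rw [hP4 i j hij, hγ, hd', hb]
            simp [hij, him]
            ring
          · rw [hP5 i j m hij him hjm, hγ, he]
            simp [hij, him, hjm]
            ring
    refine ⟨c, ?_⟩
    intro f g
    have hf : ∑ i, (f : Fin 5 → ZMod r) i = 0 := f.2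
    have hg : ∑ i, (g : Fin 5 → ZMod r) i = 0 := g.2
    -- expansion in terms of the w's, inside V
    have hfV : (∑ i, (f : Fin 5 → ZMod r) i • wV r i) = (5 : ZMod r) • f := by
      apply Subtype.ext
      rw [Submodule.coe_sum]
      funext m
      simp only [Finset.sum_apply, Pi.smul_apply, SetLike.val_smul, smul_eq_mul]
      exact hsum r _ hf m
    have hgV : (∑ j, (g : Fin 5 → ZMod r) j • wV r j) = (5 : ZMod r) • g := by
      apply Subtype.ext
      rw [Submodule.coe_sum]
      funext m
      simp only [Finset.sum_apply, Pi.smul_apply, SetLike.val_smul, smul_eq_mul]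
      exact hsum r _ hg m
    have hfF : (∑ i, (f : Fin 5 → ZMod r) i • wf r i) = (5 : ZMod r) • (f : Fin 5 → ZMod r) := by
      funext m
      simp only [Finset.sum_apply, Pi.smul_apply, smul_eq_mul]
      exact hsum r _ hf m
    have hgF : (∑ j, (g : Fin 5 → ZMod r) j • wf r j) = (5 : ZMod r) • (g : Fin 5 → ZMod r) := by
      funext m
      simp only [Finset.sum_apply, Pi.smul_apply, smul_eq_mul]
      exact hsum r _ hg m
    -- expand μ
    have hμexp : (25 : ZMod r) • μ f g
        = ∑ i, ∑ j, ((f : Fin 5 → ZMod r) i * (g : Fin 5 → ZMod r) j) • μ (wV r i) (wV r j) := by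
      rw [← bilin_expand μ _ _ _ _, hfV, hgV, map_smul, map_smul, LinearMap.smul_apply,
        smul_smul]
      norm_num
    have hγexp : (25 : ZMod r) • gammaFun r (f : Fin 5 → ZMod r) (g : Fin 5 → ZMod r)
        = ∑ i, ∑ j, ((f : Fin 5 → ZMod r) i * (g : Fin 5 → ZMod r) j)
            • gammaFun r (wf r i) (wf r j) := by
      have := bilin_expand (G r) (f : Fin 5 → ZMod r) (g : Fin 5 → ZMod r) (wf r) (wf r)
      rw [hfF, hgF, map_smul, map_smul, LinearMap.smul_apply, smul_smul] at this
      show (25 : ZMod r) • G r (f : Fin 5 → ZMod r) (g : Fin 5 → ZMod r) = _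
      have h55 : (25 : ZMod r) = 5 * 5 := by norm_num
      rw [h55]
      exact this
    -- put it together
    have main : (25 : ZMod r) • (μ f g : Fin 5 → ZMod r)
        = (25 : ZMod r) • (c • gammaFun r (f : Fin 5 → ZMod r) (g : Fin 5 → ZMod r)) := by
      have h1 := congrArg (fun v : V r => (v : Fin 5 → ZMod r)) hμexp
      simp only [SetLike.val_smul, Submodule.coe_sum] at h1
      rw [h1]
      rw [smul_comm (25 : ZMod r) c, hγexp]
      rw [Finset.smul_sum]
      refine Finset.sum_congr rfl fun i _ => ?_
      rw [Finset.smul_sum]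
      refine Finset.sum_congr rfl fun j _ => ?_
      have : (μ (wV r i) (wV r j) : Fin 5 → ZMod r) = c • gammaFun r (wf r i) (wf r j) := by
        funext m
        exact key i j m
      rw [this, smul_comm]
    exact smul_right_injective (Fin 5 → ZMod r) h25 main
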